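/- Let H be a complex Hilbert space and let S be a closed unbounded linear operator in H (a linear map from a subspace Dom(S) ⊆ H to H with closed graph) whose range Ran(S) is closed. Let P be the orthogonal projection of H onto the closure of Ker(S) and let Q be the orthogonal projection of H onto the orthogonal complement Ran(S)^⊥. Then there exists a bounded (continuous) linear operator S† on H, the generalized inverse of S, such that: S† f ∈ Dom(S) for all f ∈ H; S(S† f) = f − Q f for all f ∈ H; and S†(S u) = u − P u for all u ∈ Dom(S). -/

import Mathlib

/-- Existence of the generalized inverse of a closed unbounded operator `S` with closed
range in a Hilbert space: there is a bounded operator `S†` mapping into `Dom(S)` with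
`S S† = I - Q` and `S† S = I - P`, where `P` is the orthogonal projection onto the
closure of `Ker S` and `Q` the orthogonal projection onto `(Ran S)ᗮ`. -/
theorem exists_generalized_inverse
    (H : Type*) [NormedAddCommGroup H] [InnerProductSpace ℂ H] [CompleteSpace H]
    (S : H →ₗ.[ℂ] H) (hS : S.IsClosed)
    (hRan : IsClosed ((LinearMap.range S.toFun : Submodule ℂ H) : Set H))
    (P Q : H →L[ℂ] H)
    (hP : ∀ f : H,
      P f ∈ ((LinearMap.ker S.toFun).map S.domain.subtype).topologicalClosure ∧
      f - P f ∈ (((LinearMap.ker S.toFun).map S.domain.subtype).topologicalClosure)ᗮ)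
    (hQ : ∀ f : H,
      Q f ∈ (LinearMap.range S.toFun)ᗮ ∧
      f - Q f ∈ ((LinearMap.range S.toFun)ᗮ)ᗮ) :
    ∃ Sd : H →L[ℂ] H,
      (∀ f : H, ∃ hf : Sd f ∈ S.domain, S ⟨Sd f, hf⟩ = f - Q f) ∧
      (∀ u : S.domain, Sd (S u) = (u : H) - P (u : H)) := by
  classical
  set K₀ : Submodule ℂ H := (LinearMap.ker S.toFun).map S.domain.subtype with hK₀def
  set R : Submodule ℂ H := LinearMap.range S.toFun with hRdef
  -- the kernel (as a subspace of H) is closed, since the graph is closed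
  have hK₀closed : IsClosed (K₀ : Set H) := by
    have hset : (K₀ : Set H) = (fun x : H => (x, (0 : H))) ⁻¹' (S.graph : Set (H × H)) := by
      ext x
      simp only [Set.mem_preimage, SetLike.mem_coe, LinearPMap.mem_graph_iff, hK₀def,
        Submodule.mem_map, LinearMap.mem_ker, Submodule.coe_subtype]
      constructor
      · rintro ⟨y, hy, rfl⟩
        exact ⟨y, rfl, hy⟩
      · rintro ⟨y, rfl, h0⟩
        exact ⟨y, h0, rfl⟩
    rw [hset]
    exact hS.preimage (continuous_id.prodMk continuous_const)
  have hKeq : K₀.topologicalClosure = K₀ := hK₀closed.submodule_topologicalClosure_eq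
  rw [hKeq] at hP
  haveI : CompleteSpace R := hRan.completeSpace_coe
  have hRmem : ∀ f : H, f - Q f ∈ R := fun f => by
    have := (hQ f).2
    rwa [Submodule.orthogonal_orthogonal_eq_closure,
      hRan.submodule_topologicalClosure_eq] at this
  -- the subspace Dom(S) ∩ K₀ᗮ, as a submodule of Dom(S)
  set E : Submodule ℂ S.domain := K₀ᗮ.comap S.domain.subtype with hEdef
  set S' : ↥E →ₗ[ℂ] H := S.toFun.comp E.subtype with hS'def
  have hS'mem : ∀ v : E, S' v ∈ R := fun v => LinearMap.mem_range_self _ _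
  -- decomposition of u ∈ Dom : u - P u ∈ E with S (u - P u) = S u
  have hdecomp : ∀ u : S.domain, ∃ v : E, ((v : S.domain) : H) = (u : H) - P (u : H) ∧
      S.toFun (v : S.domain) = S.toFun u := by
    intro u
    obtain ⟨w, hwker, hw⟩ := (hP (u : H)).1
    have hw' : (w : H) = P (u : H) := hw
    refine ⟨⟨u - w, ?_⟩, ?_, ?_⟩
    · rw [hEdef, Submodule.mem_comap, Submodule.subtype_apply, Submodule.coe_sub, hw']
      exact (hP (u : H)).2
    · simp [hw']
    · simp only [map_sub]
      rw [LinearMap.mem_ker.mp hwker, sub_zero]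
  have hS'inj : Function.Injective S' := by
    intro v₁ v₂ hv
    have h0 : S.toFun ((v₁ - v₂ : E) : S.domain) = 0 := by
      have hv' : S.toFun (v₁ : S.domain) = S.toFun (v₂ : S.domain) := hv
      simp only [Submodule.coe_sub, map_sub, hv', sub_self]
    have hmemK : (((v₁ - v₂ : E) : S.domain) : H) ∈ K₀ :=
      ⟨(v₁ - v₂ : E), LinearMap.mem_ker.mpr h0, rfl⟩
    have hmemKo : (((v₁ - v₂ : E) : S.domain) : H) ∈ K₀ᗮ := (v₁ - v₂ : E).2
    have : (((v₁ - v₂ : E) : S.domain) : H) = 0 := by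
      have := Submodule.mem_orthogonal K₀ _ |>.mp hmemKo _ hmemK
      rwa [inner_self_eq_zero] at this
    have : (v₁ - v₂ : E) = 0 := by
      ext
      exact this
    exact sub_eq_zero.mp this
  have hS'surj : ∀ r : R, ∃ v : E, S' v = (r : H) := by
    rintro ⟨_, u, rfl⟩
    obtain ⟨v, _, hv2⟩ := hdecomp u
    exact ⟨v, hv2⟩
  -- the bijection E ≃ R
  set e : ↥E ≃ₗ[ℂ] ↥R := LinearEquiv.ofBijective (S'.codRestrict R hS'mem)
    ⟨fun v₁ v₂ h => hS'inj (by simpa [Subtype.ext_iff] using h),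
     fun r => by obtain ⟨v, hv⟩ := hS'surj r; exact ⟨v, Subtype.ext hv⟩⟩ with hedef
  have he_apply : ∀ v : E, ((e v : H)) = S' v := fun v => rfl
  set T : ↥R →ₗ[ℂ] H := (S.domain.subtype.comp E.subtype).comp e.symm.toLinearMap with hTdef
  have hT_apply : ∀ r : R, T r = ((e.symm r : E) : S.domain) := fun r => rfl
  -- characterize T via the graph of S
  have hT_spec : ∀ (r : R) (v : H), T r = v ↔ ((v, (r : H)) ∈ S.graph ∧ v ∈ K₀ᗮ) := by
    intro r v
    constructor
    · rintro rfl
      refine ⟨?_, ?_⟩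
      · refine (S.mem_graph_iff).mpr ⟨(e.symm r : E), rfl, ?_⟩
        have := he_apply (e.symm r)
        rw [e.apply_symm_apply] at this
        exact this.symm
      · exact (e.symm r : E).2
    · rintro ⟨hg, hko⟩
      obtain ⟨y, hy1, hy2⟩ := (S.mem_graph_iff).mp hg
      have hyE : y ∈ E := by
        simp only [hEdef, Submodule.mem_comap, Submodule.coe_subtype]
        rw [hy1]; exact hko
      have : e ⟨y, hyE⟩ = r := by
        apply Subtype.ext
        rw [he_apply]
        simpa [hS'def] using hy2
      rw [hT_apply, ← this, e.symm_apply_apply]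
      exact hy1
  have hTgraph : IsClosed (T.graph : Set (↥R × H)) := by
    have hset : (T.graph : Set (↥R × H)) =
        ((fun p : ↥R × H => (p.2, (p.1 : H))) ⁻¹' (S.graph : Set (H × H))) ∩
        ((fun p : ↥R × H => p.2) ⁻¹' (K₀ᗮ : Set H)) := by
      ext ⟨r, v⟩
      simp only [SetLike.mem_coe, LinearMap.mem_graph_iff, Set.mem_inter_iff,
        Set.mem_preimage]
      constructor
      · rintro rfl
        exact (hT_spec r (T r)).mp rfl
      · rintro ⟨h1, h2⟩
        exact ((hT_spec r v).mpr ⟨h1, h2⟩).symm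
    rw [hset]
    exact ((hS.preimage (continuous_snd.prodMk
        (continuous_subtype_val.comp continuous_fst))).inter
      (K₀.isClosed_orthogonal.preimage continuous_snd))
  have hTcont : Continuous T := T.continuous_of_isClosed_graph hTgraph
  set π : H →L[ℂ] ↥R :=
    (ContinuousLinearMap.id ℂ H - Q).codRestrict R (fun f => hRmem f) with hπdef
  set Sd : H →L[ℂ] H := (⟨T, hTcont⟩ : ↥R →L[ℂ] H).comp π with hSddef
  have hSd_apply : ∀ f : H, Sd f = T ⟨f - Q f, hRmem f⟩ := fun f => rfl
  refine ⟨Sd, ?_, ?_⟩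
  · intro f
    have hspec := (hT_spec ⟨f - Q f, hRmem f⟩ (T ⟨f - Q f, hRmem f⟩)).mp rfl
    obtain ⟨y, hy1, hy2⟩ := (S.mem_graph_iff).mp hspec.1
    have hy1' : (y : H) = T ⟨f - Q f, hRmem f⟩ := hy1
    have hmem : Sd f ∈ S.domain := by
      rw [hSd_apply, ← hy1']; exact y.2
    refine ⟨hmem, ?_⟩
    have : (⟨Sd f, hmem⟩ : S.domain) = y := by
      apply Subtype.ext
      show Sd f = (y : H)
      rw [hSd_apply, hy1']
    rw [this]
    exact hy2
  · intro u
    have hQ0 : Q (S u) = 0 := by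
      have h1 : Q (S u) ∈ Rᗮ := (hQ (S u)).1
      have h2 : Q (S u) ∈ R := by
        have hsub : S u - Q (S u) ∈ R := hRmem (S u)
        have hSu : S u ∈ R := LinearMap.mem_range_self _ u
        have := Submodule.sub_mem R hSu hsub
        simpa using this
      have := (Submodule.mem_orthogonal R _).mp h1 _ h2
      rwa [inner_self_eq_zero] at this
    obtain ⟨v, hv1, hv2⟩ := hdecomp u
    have hSuR : (S u : H) ∈ R := LinearMap.mem_range_self _ u
    have harg : (⟨S u - Q (S u), hRmem (S u)⟩ : ↥R) = ⟨S u, hSuR⟩ := by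
      apply Subtype.ext
      simp [hQ0]
    rw [hSd_apply, harg]
    have : T ⟨S u, hSuR⟩ = ((v : S.domain) : H) := by
      rw [hT_spec]
      refine ⟨?_, ?_⟩
      · exact (S.mem_graph_iff).mpr ⟨(v : S.domain), rfl, hv2⟩
      · exact v.2
    rw [this, hv1]
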